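/- If R_m = R for all m, and Cov(V(z_k, Y), V(z_l, Y)) >= 0 for all k != l, then Var(theta_hat_s) <= Var(tilde_theta) <= Var(theta_hat): the Partitioned MC estimator has smaller variance than the Shared Sample MC estimator, which in turn has smaller variance than the basic MC estimator. -/
import Mathlib


/-- Mean of f under the density pY on the finite space {0,1}^k. -/
def meanY (k : ℕ) (pY : (Fin k → Bool) → ℝ) (f : (Fin k → Bool) → ℝ) : ℝ :=
  ∑ y : Fin k → Bool, f y * pY y

/-- Variance of f under the density pY. -/
def varY (k : ℕ) (pY : (Fin k → Bool) → ℝ) (f : (Fin k → Bool) → ℝ) : ℝ :=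
  ∑ y : Fin k → Bool, (f y - meanY k pY f) ^ 2 * pY y

/-- Covariance of f and g under the density pY. -/
def covY (k : ℕ) (pY : (Fin k → Bool) → ℝ) (f g : (Fin k → Bool) → ℝ) : ℝ :=
  ∑ y : Fin k → Bool, (f y - meanY k pY f) * (g y - meanY k pY g) * pY y

lemma covY_self (k : ℕ) (pY f : (Fin k → Bool) → ℝ) : covY k pY f f = varY k pY f := by
  unfold covY varY
  apply Finset.sum_congr rfl
  intro y _; ring

lemma meanY_wsum {ι : Type*} [Fintype ι] (k : ℕ) (pY : (Fin k → Bool) → ℝ)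
    (f : ι → (Fin k → Bool) → ℝ) (w : ι → ℝ) :
    meanY k pY (fun y => ∑ i, f i y * w i) = ∑ i, meanY k pY (f i) * w i := by
  unfold meanY
  simp only [Finset.sum_mul]
  rw [Finset.sum_comm]
  apply Finset.sum_congr rfl; intro i _
  apply Finset.sum_congr rfl; intro y _; ring

lemma varY_wsum {ι : Type*} [Fintype ι] (k : ℕ) (pY : (Fin k → Bool) → ℝ)
    (f : ι → (Fin k → Bool) → ℝ) (w : ι → ℝ) :
    varY k pY (fun y => ∑ i, f i y * w i)
      = ∑ i, ∑ j, covY k pY (f i) (f j) * (w i * w j) := by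
  unfold varY covY
  rw [meanY_wsum]
  have hsub : ∀ y : Fin k → Bool,
      ((fun y => ∑ i, f i y * w i) y - ∑ i, meanY k pY (f i) * w i)
        = ∑ i, (f i y - meanY k pY (f i)) * w i := by
    intro y
    rw [← Finset.sum_sub_distrib]
    apply Finset.sum_congr rfl; intro i _; ring
  simp only [hsub]
  have hsq : ∀ y : Fin k → Bool,
      (∑ i, (f i y - meanY k pY (f i)) * w i) ^ 2
        = ∑ i, ∑ j, ((f i y - meanY k pY (f i)) * w i)
            * ((f j y - meanY k pY (f j)) * w j) := by
    intro y; rw [sq, Finset.sum_mul_sum]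
  simp only [hsq, Finset.sum_mul]
  rw [Finset.sum_comm]
  apply Finset.sum_congr rfl; intro i _
  rw [Finset.sum_comm]
  apply Finset.sum_congr rfl; intro j _
  apply Finset.sum_congr rfl; intro y _; ring


lemma testBit_enc : ∀ (r : ℕ) (z : Fin r → Bool) (i : Fin r),
    (∑ j : Fin r, (z j).toNat * 2 ^ (j : ℕ)).testBit i = z i := by
  intro r
  induction r with
  | zero => intro z i; exact i.elim0
  | succ n ih =>
      intro z i
      have hsum : (∑ j : Fin (n+1), (z j).toNat * 2 ^ (j : ℕ))
          = (z 0).toNat + 2 * ∑ j : Fin n, (z j.succ).toNat * 2 ^ (j : ℕ) := by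
        rw [Fin.sum_univ_succ, Finset.mul_sum]
        congr 1
        · simp
        · apply Finset.sum_congr rfl; intro j _
          simp [Fin.val_succ, pow_succ]; ring
      rw [hsum]
      rcases i with ⟨iv, hiv⟩
      cases iv with
      | zero =>
          rw [Nat.testBit_zero]
          rcases Bool.dichotomy (z 0) with h | h <;> simp [h, Nat.add_mul_mod_self_left] <;> omega
      | succ m =>
          have : ((z 0).toNat + 2 * ∑ j : Fin n, (z j.succ).toNat * 2 ^ (j : ℕ)).testBit (m+1)
              = (∑ j : Fin n, (z j.succ).toNat * 2 ^ (j : ℕ)).testBit m := by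
            rw [Nat.testBit_succ]
            congr 1
            rcases Bool.dichotomy (z 0) with h | h <;> simp [h] <;> omega
          rw [this, ih (fun j => z j.succ) ⟨m, Nat.lt_of_succ_lt_succ hiv⟩]
          rfl

lemma enc_lt (r : ℕ) (z : Fin r → Bool) :
    (∑ j : Fin r, (z j).toNat * 2 ^ (j : ℕ)) < 2 ^ r := by
  induction r with
  | zero => simp
  | succ n ih =>
      have hsum : (∑ j : Fin (n+1), (z j).toNat * 2 ^ (j : ℕ))
          = (z 0).toNat + 2 * ∑ j : Fin n, (z (Fin.succ j)).toNat * 2 ^ (j : ℕ) := by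
        rw [Fin.sum_univ_succ, Finset.mul_sum]
        congr 1
        · simp
        · apply Finset.sum_congr rfl; intro j _
          simp [Fin.val_succ, pow_succ]; ring
      rw [hsum]
      have h1 := ih (fun j => z (Fin.succ j))
      have h2 : (z 0).toNat ≤ 1 := Bool.toNat_le _
      rw [pow_succ]
      omega

lemma sum_range_two_pow_eq (r : ℕ) (F : (Fin r → Bool) → ℝ) :
    ∑ m ∈ Finset.range (2 ^ r), F (fun j : Fin r => m.testBit j)
      = ∑ z : Fin r → Bool, F z := by
  apply Finset.sum_nbij' (fun m => fun j : Fin r => m.testBit j)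
    (fun z => ∑ j : Fin r, (z j).toNat * 2 ^ (j : ℕ))
  · intro a _; exact Finset.mem_univ _
  · intro z _; exact Finset.mem_range.2 (enc_lt r z)
  · intro m hm
    apply Nat.eq_of_testBit_eq
    intro i
    by_cases hi : i < r
    · exact testBit_enc r _ ⟨i, hi⟩
    · have h1 : (∑ j : Fin r, ((fun j : Fin r => m.testBit j) j).toNat * 2 ^ (j:ℕ)) < 2 ^ i :=
        lt_of_lt_of_le (enc_lt r _) (Nat.pow_le_pow_right (by norm_num) (le_of_not_gt hi))
      have h2 : m < 2 ^ i :=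
        lt_of_lt_of_le (Finset.mem_range.1 hm) (Nat.pow_le_pow_right (by norm_num) (le_of_not_gt hi))
      rw [Nat.testBit_lt_two_pow h1, Nat.testBit_lt_two_pow h2]
  · intro z _
    funext j
    exact testBit_enc r z j
  · intro a _; rfl

/-- Theorem 4.1: if R_m = R for all m and the V(z_k,Y), V(z_l,Y) are positively
correlated for all k ≠ l, then Var(θ̂_s) ≤ Var(θ̃) ≤ Var(θ̂): the Partitioned MC
estimator has smaller variance than the Shared Sample MC estimator, which in
turn has smaller variance than the basic MC estimator.  Here
Var(θ̂_s) = (1/R) ∑_m Var_Y(V(z_m,Y)) P(D_m)², with P(D_m) = pZ(z_m),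
Var(θ̃) = (1/R) Var_Y(∑_m V(z_m,Y) P(D_m)), and Var(θ̂) = Var(V(Z,Y))/R. -/
theorem partitioned_vs_shared_vs_basic (r k : ℕ) (R : ℝ) (hR : 0 < R)
    (pZ : (Fin r → Bool) → ℝ) (pY : (Fin k → Bool) → ℝ)
    (V : (Fin r → Bool) → (Fin k → Bool) → ℝ)
    (hpZ0 : ∀ z, 0 ≤ pZ z) (hpZ1 : ∑ z : Fin r → Bool, pZ z = 1)
    (hpY0 : ∀ y, 0 ≤ pY y) (hpY1 : ∑ y : Fin k → Bool, pY y = 1)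
    (hcov : ∀ kk ∈ Finset.range (2 ^ r), ∀ ll ∈ Finset.range (2 ^ r), kk ≠ ll →
      0 ≤ covY k pY (V (fun j : Fin r => kk.testBit j)) (V (fun j : Fin r => ll.testBit j))) :
    (fun θ : ℝ =>
      (fun varPart varShared varBasic : ℝ =>
        varPart ≤ varShared ∧ varShared ≤ varBasic)
        ((1 / R) * ∑ m ∈ Finset.range (2 ^ r),
          varY k pY (V (fun j : Fin r => m.testBit j)) * pZ (fun j : Fin r => m.testBit j) ^ 2)
        ((1 / R) * varY k pY (fun y => ∑ m ∈ Finset.range (2 ^ r),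
          V (fun j : Fin r => m.testBit j) y * pZ (fun j : Fin r => m.testBit j)))
        ((1 / R) * ∑ z : Fin r → Bool, ∑ y : Fin k → Bool,
          (V z y - θ) ^ 2 * (pZ z * pY y)))
      (∑ z : Fin r → Bool, ∑ y : Fin k → Bool, V z y * (pZ z * pY y)) := by
  dsimp only
  set θ : ℝ := ∑ z : Fin r → Bool, ∑ y : Fin k → Bool, V z y * (pZ z * pY y) with hθdef
  have hRpos : (0:ℝ) ≤ 1 / R := by positivity
  -- reindex
  have h1 : (∑ m ∈ Finset.range (2 ^ r),
        varY k pY (V (fun j : Fin r => m.testBit j)) * pZ (fun j : Fin r => m.testBit j) ^ 2)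
      = ∑ z : Fin r → Bool, varY k pY (V z) * pZ z ^ 2 :=
    sum_range_two_pow_eq r (fun z => varY k pY (V z) * pZ z ^ 2)
  have h2 : (fun y => ∑ m ∈ Finset.range (2 ^ r),
        V (fun j : Fin r => m.testBit j) y * pZ (fun j : Fin r => m.testBit j))
      = fun y => ∑ z : Fin r → Bool, V z y * pZ z :=
    funext fun y => sum_range_two_pow_eq r (fun z => V z y * pZ z)
  rw [h1, h2]
  have hcov' : ∀ z z' : Fin r → Bool, z ≠ z' → 0 ≤ covY k pY (V z) (V z') := by
    intro z z' hne
    have hz : (fun j : Fin r => (∑ j : Fin r, (z j).toNat * 2 ^ (j:ℕ)).testBit j) = z :=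
      funext fun j => testBit_enc r z j
    have hz' : (fun j : Fin r => (∑ j : Fin r, (z' j).toNat * 2 ^ (j:ℕ)).testBit j) = z' :=
      funext fun j => testBit_enc r z' j
    have hne2 : (∑ j : Fin r, (z j).toNat * 2 ^ (j:ℕ)) ≠ ∑ j : Fin r, (z' j).toNat * 2 ^ (j:ℕ) := by
      intro h
      apply hne
      rw [← hz, ← hz', h]
    have := hcov _ (Finset.mem_range.2 (enc_lt r z)) _ (Finset.mem_range.2 (enc_lt r z')) hne2
    rwa [hz, hz'] at this
  constructor
  · -- partitioned ≤ shared
    rw [varY_wsum k pY V pZ]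
    apply mul_le_mul_of_nonneg_left _ hRpos
    apply Finset.sum_le_sum
    intro z _
    rw [← Finset.add_sum_erase Finset.univ _ (Finset.mem_univ z), covY_self]
    have : varY k pY (V z) * pZ z ^ 2 = varY k pY (V z) * (pZ z * pZ z) := by ring
    rw [this]
    apply le_add_of_nonneg_right
    apply Finset.sum_nonneg
    intro z' hz'
    have hne : z ≠ z' := fun h => (Finset.mem_erase.1 hz').1 h.symm
    exact mul_nonneg (hcov' z z' hne) (mul_nonneg (hpZ0 z) (hpZ0 z'))
  · -- shared ≤ basic
    apply mul_le_mul_of_nonneg_left _ hRpos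
    have hmean : meanY k pY (fun y => ∑ z : Fin r → Bool, V z y * pZ z) = θ := by
      unfold meanY
      rw [hθdef, Finset.sum_comm]
      apply Finset.sum_congr rfl; intro y _
      rw [Finset.sum_mul]
      apply Finset.sum_congr rfl; intro z _; ring
    unfold varY
    rw [hmean]
    have hRHS : (∑ z : Fin r → Bool, ∑ y : Fin k → Bool, (V z y - θ) ^ 2 * (pZ z * pY y))
        = ∑ y : Fin k → Bool, (∑ z : Fin r → Bool, (V z y - θ) ^ 2 * pZ z) * pY y := by
      rw [Finset.sum_comm]
      apply Finset.sum_congr rfl; intro y _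
      rw [Finset.sum_mul]
      apply Finset.sum_congr rfl; intro z _; ring
    rw [hRHS]
    apply Finset.sum_le_sum
    intro y _
    apply mul_le_mul_of_nonneg_right _ (hpY0 y)
    have hgy : (fun y => ∑ z : Fin r → Bool, V z y * pZ z) y - θ
        = ∑ z : Fin r → Bool, (V z y - θ) * pZ z := by
      simp only [sub_mul, Finset.sum_sub_distrib]
      rw [← Finset.mul_sum, hpZ1, mul_one]
    rw [hgy]
    have key := Finset.sum_mul_sq_le_sq_mul_sq Finset.univ
      (fun z : Fin r → Bool => (V z y - θ) * Real.sqrt (pZ z))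
      (fun z : Fin r → Bool => Real.sqrt (pZ z))
    have e1 : ∑ z : Fin r → Bool, ((V z y - θ) * Real.sqrt (pZ z)) * Real.sqrt (pZ z)
        = ∑ z : Fin r → Bool, (V z y - θ) * pZ z := by
      apply Finset.sum_congr rfl; intro z _
      rw [mul_assoc, Real.mul_self_sqrt (hpZ0 z)]
    have e2 : ∑ z : Fin r → Bool, ((V z y - θ) * Real.sqrt (pZ z)) ^ 2
        = ∑ z : Fin r → Bool, (V z y - θ) ^ 2 * pZ z := by
      apply Finset.sum_congr rfl; intro z _
      rw [mul_pow, Real.sq_sqrt (hpZ0 z)]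
    have e3 : ∑ z : Fin r → Bool, (Real.sqrt (pZ z)) ^ 2 = 1 := by
      rw [← hpZ1]
      apply Finset.sum_congr rfl; intro z _
      exact Real.sq_sqrt (hpZ0 z)
    rw [e1, e2, e3, mul_one] at key
    exact key
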